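/- The points (0, −1/β^4), (−1/4, 1/8 − 1/β^4), and (−4/β^4, 1/β^4) are the three points of order 2 on the elliptic curve E_2(β): Y² + XY + (2/β^4)Y = X³ + (4/β^4)X² − 1/β^8, over a field of characteristic 0 with β ≠ 0 and β^4 ≠ 16. -/

import Mathlib

lemma stmt_19_aux {K : Type*} [Field K] [CharZero K] (b : K) (hb : b ≠ 0) (x y : K) :
    (y ^ 2 + x * y + (2 / b) * y = x ^ 3 + (4 / b) * x ^ 2 - 1 / b ^ 2 ∧
        2 * y + x + 2 / b = 0) ↔
      ((x, y) = (0, -1 / b) ∨ (x, y) = (-1 / 4, 1 / 8 - 1 / b) ∨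
        (x, y) = (-4 / b, 1 / b)) := by
  constructor
  · rintro ⟨h1, h2⟩
    have hy : y = -(x + 2 / b) / 2 := by linear_combination h2 / 2
    have e2 : 2 * b * y + b * x + 2 = 0 := by
      field_simp at h2
      linear_combination h2
    have hx : b ^ 3 * (x * (4 * x + 1) * (b * x + 4)) = 0 := by
      field_simp at h1
      linear_combination (-4 * b ^ 2 : K) * h1 + (b ^ 2 * (2 * b * y + b * x + 2)) * e2
    have hx' : x * (4 * x + 1) * (b * x + 4) = 0 := by
      rcases mul_eq_zero.mp hx with h | h
      · exact absurd h (pow_ne_zero 3 hb)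
      · exact h
    rcases mul_eq_zero.mp hx' with h | h
    · rcases mul_eq_zero.mp h with h | h
      · left
        have : y = -1 / b := by rw [hy, h]; ring
        simp [h, this]
      · right; left
        have hxv : x = -1 / 4 := by linear_combination h / 4
        have : y = 1 / 8 - 1 / b := by rw [hy, hxv]; ring
        simp [hxv, this]
    · right; right
      have hxv : x = -4 / b := by
        field_simp
        linear_combination h
      have : y = 1 / b := by rw [hy, hxv]; field_simp; ring
      simp [hxv, this]
  · rintro (h | h | h) <;>
      (obtain ⟨hx, hy⟩ := Prod.mk.injEq .. ▸ h
       subst hx; subst hy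
       refine ⟨by field_simp; try ring_nf; try field_simp; try ring, by field_simp; try ring_nf; try field_simp; try ring⟩)

/-- The points `(0, −1/β⁴)`, `(−1/4, 1/8 − 1/β⁴)`, `(−4/β⁴, 1/β⁴)` are exactly the
points of order `2` on `E_2(β) : Y² + XY + (2/β⁴)Y = X³ + (4/β⁴)X² − 1/β⁸` over a
field of characteristic `0` with `β ≠ 0`, `β⁴ ≠ 16`.  A point `(x,y)` on the curve has
order `2` iff `2y + x + a₃ = 0`, with `a₃ = 2/β⁴`. -/
theorem stmt_19 {K : Type*} [Field K] [CharZero K] (β : K) (hβ : β ≠ 0)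
    (hβ16 : β ^ 4 ≠ 16) (x y : K) :
    (y ^ 2 + x * y + (2 / β ^ 4) * y = x ^ 3 + (4 / β ^ 4) * x ^ 2 - 1 / β ^ 8 ∧
        2 * y + x + 2 / β ^ 4 = 0) ↔
      ((x, y) = (0, -1 / β ^ 4) ∨ (x, y) = (-1 / 4, 1 / 8 - 1 / β ^ 4) ∨
        (x, y) = (-4 / β ^ 4, 1 / β ^ 4)) := by
  have h8 : (β : K) ^ 8 = (β ^ 4) ^ 2 := by ring
  rw [h8]
  exact stmt_19_aux (β ^ 4) (pow_ne_zero 4 hβ) x y
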